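/- arXiv:1907.13217 — 2 statements merged into one kernel-verified Lean document; each statement's English description precedes it below -/
import Mathlib

section
/- Let $\mathcal{C}_{\le d}$ be the squarefree evaluation code of degree $d$ on the affine torus $T = (\mathbb{F}_q^*)^s$, with $1 \le d \le s$. If $q \ge 3$, then the minimum distance of $\mathcal{C}_{\le d}$ is $(q-2)^{d}(q-1)^{s-d}$. -/
open MvPolynomial
open scoped MonomialOrder

variable {K : Type*} [Field K] {s : ℕ}

/-- The exponent of the initial (leading) monomial of `f` with respect to the
monomial order `m` (it is `0` for `f = 0`). -/
noncomputable def leadExp (m : MonomialOrder (Fin s)) (f : MvPolynomial (Fin s) K) :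
    Fin s →₀ ℕ :=
  m.toSyn.symm (f.support.sup fun a => m.toSyn a)

/-- The coefficient of the initial monomial of `f`; `f` is monic when this is `1`. -/
noncomputable def leadCoeff (m : MonomialOrder (Fin s)) (f : MvPolynomial (Fin s) K) : K :=
  f.coeff (leadExp m f)

/-- The initial monomial `in_≺(f)` of `f`, as a (monic) monomial of the polynomial ring. -/
noncomputable def leadMon (m : MonomialOrder (Fin s)) (f : MvPolynomial (Fin s) K) :
    MvPolynomial (Fin s) K :=
  monomial (leadExp m f) (1 : K)

/-- The initial ideal `in_≺(I)` of an ideal `I`: the ideal generated by the initial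
monomials of the nonzero elements of `I`. -/
noncomputable def initialIdeal (m : MonomialOrder (Fin s)) (I : Ideal (MvPolynomial (Fin s) K)) :
    Ideal (MvPolynomial (Fin s) K) :=
  Ideal.span { g | ∃ f ∈ I, f ≠ 0 ∧ g = leadMon m f }

/-- The footprint `Δ_≺(I)` of `S/I`: the set of standard monomials, i.e. the (monic)
monomials that do not belong to the initial ideal of `I`. -/
noncomputable def stdMonomials (m : MonomialOrder (Fin s)) (I : Ideal (MvPolynomial (Fin s) K)) :
    Set (MvPolynomial (Fin s) K) :=
  { g | (∃ a : Fin s →₀ ℕ, g = monomial a (1 : K)) ∧ g ∉ initialIdeal m I }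

/-- `KΔ_≺(I)`, the `K`-linear span of the standard monomials of `S/I`. -/
noncomputable def stdSpan (m : MonomialOrder (Fin s)) (I : Ideal (MvPolynomial (Fin s) K)) :
    Submodule K (MvPolynomial (Fin s) K) :=
  Submodule.span K (stdMonomials m I)

/-- A monomial order is graded if monomials are first compared by their total degrees. -/
def IsGradedOrder (m : MonomialOrder (Fin s)) : Prop :=
  ∀ a b : Fin s →₀ ℕ, a.degree < b.degree → a ≺[m] b

/-- The vanishing ideal `I(X)` of a set of points `X ⊆ 𝔸^s = K^s`. -/
def affVanishingIdeal (X : Set (Fin s → K)) : Ideal (MvPolynomial (Fin s) K) where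
  carrier := { f | ∀ x ∈ X, eval x f = 0 }
  add_mem' := by
    intro a b ha hb x hx
    simp [ha x hx, hb x hx]
  zero_mem' := by intro x hx; simp
  smul_mem' := by
    intro c f hf x hx
    simp [smul_eq_mul, hf x hx]

/-- The evaluation map `S → K^X`, `f ↦ (f(P₁),…,f(P_m))`, at the points of a finite
set `X` of points of `𝔸^s`. -/
noncomputable def evalMap (X : Finset (Fin s → K)) :
    MvPolynomial (Fin s) K →ₗ[K] (X → K) where
  toFun f := fun x => eval (x : Fin s → K) f
  map_add' f g := by funext x; simp
  map_smul' c f := by funext x; simp [Algebra.smul_def]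

/-- The degree `deg(S/I)`.  For the ideals considered in this paper `S/I` is a
zero-dimensional ring, and its degree (the normalized leading coefficient of the
affine Hilbert polynomial) equals `dim_K (S/I)` (and is `0` when `I = S`). -/
noncomputable def adeg (I : Ideal (MvPolynomial (Fin s) K)) : ℕ :=
  Module.finrank K (MvPolynomial (Fin s) K ⧸ I)

/-- The affine Hilbert function `H_I^a(d) = dim_K (S_{≤d}/I_{≤d})`, computed as the
dimension of the image of `S_{≤d}` in `S/I`. -/
noncomputable def affineHilbert (I : Ideal (MvPolynomial (Fin s) K)) (d : ℕ) : ℕ :=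
  Module.finrank K
    ((restrictTotalDegree (Fin s) K d).map (Submodule.restrictScalars K I).mkQ)

/-- The support `χ(D)` of a subcode `D ⊆ K^ι`. -/
def codeSupport {ι : Type*} (D : Submodule K (ι → K)) : Set ι :=
  { i | ∃ v ∈ D, v i ≠ 0 }

/-- The `r`-th generalized Hamming weight of a linear code `C ⊆ K^ι`: the minimum
size of the support of an `r`-dimensional subcode. -/
noncomputable def ghw {ι : Type*} (C : Submodule K (ι → K)) (r : ℕ) : ℕ :=
  sInf { n | ∃ D : Submodule K (ι → K),
    D ≤ C ∧ Module.finrank K (↥D) = r ∧ (codeSupport D).ncard = n }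

/-- The minimum distance of a linear code: the least Hamming weight of a nonzero
codeword. -/
noncomputable def minDist {ι : Type*} (C : Submodule K (ι → K)) : ℕ :=
  sInf { n | ∃ v ∈ C, v ≠ 0 ∧ ({ i : ι | v i ≠ 0 }).ncard = n }

/-- The affine torus `T = (K^*)^s`. -/
noncomputable def torus (K : Type*) [Field K] [Fintype K] (s : ℕ) : Finset (Fin s → K) :=
  letI := Classical.decEq K
  Finset.univ.filter fun x => ∀ i, x i ≠ 0

/-- `V_d`: the set of squarefree (monic) monomials of degree `d`. -/
def sqfreeMonomials (K : Type*) [Field K] (s d : ℕ) : Set (MvPolynomial (Fin s) K) :=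
  { g | ∃ a : Fin s →₀ ℕ, (∀ i, a i ≤ 1) ∧ a.degree = d ∧ g = monomial a (1 : K) }

/-- `V_{≤d}`: the set of squarefree (monic) monomials of degree at most `d`. -/
def sqfreeMonomialsLe (K : Type*) [Field K] (s d : ℕ) : Set (MvPolynomial (Fin s) K) :=
  { g | ∃ a : Fin s →₀ ℕ, (∀ i, a i ≤ 1) ∧ a.degree ≤ d ∧ g = monomial a (1 : K) }

/-! ### Auxiliary lemmas -/

set_option linter.unusedSectionVars false

section Aux

variable [Fintype K] [DecidableEq K]

lemma mem_torus' {x : Fin s → K} : x ∈ torus K s ↔ ∀ i, x i ≠ 0 := by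
  classical
  simp [torus]

omit [Fintype K] [DecidableEq K] in
lemma degree_eq_sum_univ {n : ℕ} (f : Fin n →₀ ℕ) : Finsupp.degree f = ∑ j : Fin n, f j := by
  rw [Finsupp.degree]
  exact Finset.sum_subset (Finset.subset_univ _) (by
    intro x _ hx
    simpa using (Finsupp.notMem_support_iff.mp hx))

omit [Fintype K] [DecidableEq K] in
lemma finsupp_degree_cons {n : ℕ} (i : ℕ) (m : Fin n →₀ ℕ) :
    Finsupp.degree (Finsupp.cons i m) = i + Finsupp.degree m := by
  rw [degree_eq_sum_univ, degree_eq_sum_univ, Fin.sum_univ_succ, Finsupp.cons_zero]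
  simp [Finsupp.cons_succ]

omit [Fintype K] [DecidableEq K] in
lemma totalDegree_le_of_forall {f : MvPolynomial (Fin s) K} {d : ℕ}
    (h : ∀ a ∈ f.support, Finsupp.degree a ≤ d) : f.totalDegree ≤ d :=
  Finset.sup_le fun a ha => h a ha

omit [Fintype K] [DecidableEq K] in
lemma degree_le_totalDegree {f : MvPolynomial (Fin s) K} {a : Fin s →₀ ℕ}
    (h : a ∈ f.support) : Finsupp.degree a ≤ f.totalDegree :=
  MvPolynomial.le_totalDegree h

/-- Counting nonzeros of an evaluation, fiberwise over the first coordinate. -/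
lemma cnt_succ (f : MvPolynomial (Fin (s + 1)) K) (fa : K → MvPolynomial (Fin s) K)
    (hfa : ∀ a : K, a ≠ 0 → ∀ y : Fin s → K, eval (Fin.cons a y) f = eval y (fa a)) :
    ((torus K (s + 1)).filter fun x => eval x f ≠ 0).card
      = ∑ a ∈ Finset.univ.filter (fun a : K => a ≠ 0),
          ((torus K s).filter fun y => eval y (fa a) ≠ 0).card := by
  classical
  rw [Finset.card_eq_sum_card_fiberwise
      (f := fun x : Fin (s + 1) → K => x 0)
      (t := Finset.univ.filter (fun a : K => a ≠ 0))
      (fun x hx => by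
        rcases Finset.mem_filter.mp hx with ⟨hx1, _⟩
        simpa using (mem_torus'.mp hx1) 0)]
  refine Finset.sum_congr rfl fun a ha => ?_
  have ha0 : a ≠ 0 := by simpa using ha
  refine Finset.card_nbij' (fun x => Fin.tail x) (fun y => Fin.cons a y) ?_ ?_ ?_ ?_
  · intro x hx
    rcases Finset.mem_filter.mp hx with ⟨hx1, hx0⟩
    rcases Finset.mem_filter.mp hx1 with ⟨hxt, hxe⟩
    refine Finset.mem_filter.mpr ⟨mem_torus'.mpr fun i => (mem_torus'.mp hxt) i.succ, ?_⟩
    have : Fin.cons a (Fin.tail x) = x := by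
      rw [← hx0]; exact Fin.cons_self_tail x
    rw [← hfa a ha0 (Fin.tail x), this]
    exact hxe
  · intro y hy
    rcases Finset.mem_filter.mp hy with ⟨hyt, hye⟩
    refine Finset.mem_filter.mpr ⟨Finset.mem_filter.mpr ⟨mem_torus'.mpr fun i => ?_, ?_⟩, ?_⟩
    · refine Fin.cases ?_ ?_ i
      · simpa using ha0
      · intro j; simpa using (mem_torus'.mp hyt) j
    · rw [hfa a ha0 y]; exact hye
    · simp
  · intro x hx
    rcases Finset.mem_filter.mp hx with ⟨_, hx0⟩
    rw [← hx0]; exact Fin.cons_self_tail x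
  · intro y _; simp

omit [Fintype K] [DecidableEq K] in
lemma finSuccEquiv_natDegree_le_one {f : MvPolynomial (Fin (s + 1)) K}
    (hml : ∀ a ∈ f.support, ∀ i, a i ≤ 1) :
    (finSuccEquiv K s f).natDegree ≤ 1 := by
  rw [Polynomial.natDegree_le_iff_coeff_eq_zero]
  intro i hi
  apply MvPolynomial.ext
  intro m
  rw [finSuccEquiv_coeff_coeff, coeff_zero]
  by_contra hne
  have hmem : Finsupp.cons i m ∈ f.support := MvPolynomial.mem_support_iff.mpr hne
  have := hml _ hmem 0
  rw [Finsupp.cons_zero] at this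
  omega

omit [Fintype K] [DecidableEq K] in
lemma finSuccEquiv_coeff_ml {f : MvPolynomial (Fin (s + 1)) K}
    (hml : ∀ a ∈ f.support, ∀ i, a i ≤ 1) (i : ℕ) :
    ∀ m ∈ ((finSuccEquiv K s f).coeff i).support, ∀ j, m j ≤ 1 := by
  intro m hm j
  have hne : coeff (Finsupp.cons i m) f ≠ 0 := by
    rw [← finSuccEquiv_coeff_coeff]
    exact MvPolynomial.mem_support_iff.mp hm
  have := hml _ (MvPolynomial.mem_support_iff.mpr hne) j.succ
  rwa [Finsupp.cons_succ] at this

omit [Fintype K] [DecidableEq K] in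
lemma finSuccEquiv_coeff_totalDegree {f : MvPolynomial (Fin (s + 1)) K} {d : ℕ}
    (hd : f.totalDegree ≤ d) (i : ℕ) :
    ((finSuccEquiv K s f).coeff i).totalDegree ≤ d - i := by
  apply totalDegree_le_of_forall
  intro m hm
  have hne : coeff (Finsupp.cons i m) f ≠ 0 := by
    rw [← finSuccEquiv_coeff_coeff]
    exact MvPolynomial.mem_support_iff.mp hm
  have h1 : Finsupp.degree (Finsupp.cons i m) ≤ d :=
    le_trans (degree_le_totalDegree (MvPolynomial.mem_support_iff.mpr hne)) hd
  rw [finsupp_degree_cons] at h1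
  omega

omit [Fintype K] [DecidableEq K] in
lemma eval_cons_eq {f : MvPolynomial (Fin (s + 1)) K}
    (hml : ∀ a ∈ f.support, ∀ i, a i ≤ 1) (a : K) (y : Fin s → K) :
    eval (Fin.cons a y) f =
      eval y ((finSuccEquiv K s f).coeff 0) + a * eval y ((finSuccEquiv K s f).coeff 1) := by
  rw [eval_eq_eval_mv_eval']
  conv_lhs =>
    rw [Polynomial.eq_X_add_C_of_natDegree_le_one (finSuccEquiv_natDegree_le_one hml)]
  simp only [Polynomial.map_add, Polynomial.map_mul, Polynomial.map_C, Polynomial.map_X,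
    Polynomial.eval_add, Polynomial.eval_mul, Polynomial.eval_C, Polynomial.eval_X]
  ring

omit [Fintype K] [DecidableEq K] in
lemma ne_zero_coeffs {f : MvPolynomial (Fin (s + 1)) K}
    (hml : ∀ a ∈ f.support, ∀ i, a i ≤ 1) (hf : f ≠ 0)
    (hg : (finSuccEquiv K s f).coeff 1 = 0) : (finSuccEquiv K s f).coeff 0 ≠ 0 := by
  intro hh
  apply hf
  have hF : finSuccEquiv K s f = 0 := by
    have := Polynomial.eq_X_add_C_of_natDegree_le_one (finSuccEquiv_natDegree_le_one hml)
    rw [hg, hh] at this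
    simpa using this
  have := congrArg (finSuccEquiv K s).symm hF
  simpa using this

omit [Fintype K] [DecidableEq K] in
lemma arith1 (q d n : ℕ) :
    (q - 2) ^ min d (n + 1) * (q - 1) ^ (n + 1 - min d (n + 1))
      ≤ (q - 1) * ((q - 2) ^ min d n * (q - 1) ^ (n - min d n)) := by
  rcases le_or_gt d n with hdn | hdn
  · rw [min_eq_left hdn, min_eq_left (by omega), show n + 1 - d = (n - d) + 1 by omega, pow_succ]
    exact le_of_eq (by ring)
  · rw [min_eq_right (by omega : n ≤ d), min_eq_right (by omega : n + 1 ≤ d)]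
    simp only [Nat.sub_self, pow_zero, mul_one, pow_succ]
    calc (q - 2) ^ n * (q - 2) ≤ (q - 2) ^ n * (q - 1) :=
          Nat.mul_le_mul_left _ (by omega)
      _ = (q - 1) * (q - 2) ^ n := by ring

omit [Fintype K] [DecidableEq K] in
lemma arith2 (q d n : ℕ) (hd : 1 ≤ d) :
    (q - 2) ^ min d (n + 1) * (q - 1) ^ (n + 1 - min d (n + 1))
      = (q - 2) * ((q - 2) ^ min (d - 1) n * (q - 1) ^ (n - min (d - 1) n)) := by
  have hmm : min d (n + 1) = min (d - 1) n + 1 := by omega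
  rw [hmm, show n + 1 - (min (d - 1) n + 1) = n - min (d - 1) n by omega, pow_succ]
  ring

lemma count_lower :
    ∀ (n d : ℕ) (f : MvPolynomial (Fin n) K),
    f ≠ 0 → (∀ a ∈ f.support, ∀ i, a i ≤ 1) → f.totalDegree ≤ d →
    (Fintype.card K - 2) ^ min d n * (Fintype.card K - 1) ^ (n - min d n)
      ≤ ((torus K n).filter (fun x => eval x f ≠ 0)).card := by
  intro n
  induction n with
  | zero =>
    intro d f hf hml hdeg
    rw [Nat.min_zero]
    simp only [pow_zero, Nat.sub_zero, one_mul]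
    rw [Finset.one_le_card]
    refine ⟨(fun i => i.elim0), Finset.mem_filter.mpr ⟨mem_torus'.mpr fun i => i.elim0, ?_⟩⟩
    have hc : f = C (constantCoeff f) := (MvPolynomial.eq_C_of_isEmpty f : _)
    rw [hc, eval_C]
    intro h0
    exact hf (by rw [hc, h0, map_zero])
  | succ n IH =>
    intro d f hf hml hdeg
    set g := (finSuccEquiv K n f).coeff 1 with hg
    set h := (finSuccEquiv K n f).coeff 0 with hh
    have hmlg := finSuccEquiv_coeff_ml hml 1
    have hmlh := finSuccEquiv_coeff_ml hml 0
    have hdg : g.totalDegree ≤ d - 1 := finSuccEquiv_coeff_totalDegree hdeg 1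
    have hdh : h.totalDegree ≤ d := by simpa using finSuccEquiv_coeff_totalDegree hdeg 0
    have hK1 : (Finset.univ.filter (fun a : K => a ≠ 0)).card = Fintype.card K - 1 := by
      rw [show (Finset.univ.filter (fun a : K => a ≠ 0)) = Finset.univ.erase 0 from
        Finset.filter_ne' Finset.univ 0,
        Finset.card_erase_of_mem (Finset.mem_univ 0), Finset.card_univ]
    by_cases hall : ∀ a : K, a ≠ 0 → h + C a * g ≠ 0
    · have hcnt := cnt_succ f (fun a => h + C a * g) (fun a ha y => by
        rw [eval_cons_eq hml a y, ← hh, ← hg]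
        simp only [map_add, eval_mul, eval_C])
      rw [hcnt]
      have hbound : ∀ a ∈ Finset.univ.filter (fun a : K => a ≠ 0),
          (Fintype.card K - 2) ^ min d n * (Fintype.card K - 1) ^ (n - min d n)
            ≤ ((torus K n).filter fun y => eval y (h + C a * g) ≠ 0).card := by
        intro a ha
        have ha0 : a ≠ 0 := by simpa using ha
        refine IH d _ (hall a ha0) ?_ ?_
        · intro b hb i
          rcases Finset.mem_union.mp (MvPolynomial.support_add hb) with hb' | hb'
          · exact hmlh b hb' i
          · rw [← smul_eq_C_mul] at hb'
            exact hmlg b (MvPolynomial.support_smul hb') i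
        · refine le_trans (MvPolynomial.totalDegree_add _ _) (max_le hdh ?_)
          rw [← smul_eq_C_mul]
          exact le_trans (MvPolynomial.totalDegree_smul_le _ _) (by omega)
      calc (Fintype.card K - 2) ^ min d (n + 1) *
            (Fintype.card K - 1) ^ (n + 1 - min d (n + 1))
          ≤ (Fintype.card K - 1) *
            ((Fintype.card K - 2) ^ min d n * (Fintype.card K - 1) ^ (n - min d n)) :=
            arith1 _ d n
        _ = ∑ _a ∈ Finset.univ.filter (fun a : K => a ≠ 0),
              (Fintype.card K - 2) ^ min d n * (Fintype.card K - 1) ^ (n - min d n) := by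
            rw [Finset.sum_const, hK1, smul_eq_mul]
        _ ≤ _ := Finset.sum_le_sum hbound
    · push_neg at hall
      obtain ⟨a₀, ha₀, heq⟩ := hall
      have hgne : g ≠ 0 := by
        intro hg0
        have hh0 : h = 0 := by rw [hg0, mul_zero, add_zero] at heq; exact heq
        exact (ne_zero_coeffs hml hf hg0) hh0
      have hd1 : 1 ≤ d := by
        obtain ⟨m, hm⟩ := (MvPolynomial.support_nonempty).mpr hgne
        have hne : coeff (Finsupp.cons 1 m) f ≠ 0 := by
          rw [← finSuccEquiv_coeff_coeff]
          exact MvPolynomial.mem_support_iff.mp hm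
        have h1 : Finsupp.degree (Finsupp.cons 1 m) ≤ f.totalDegree :=
          degree_le_totalDegree (MvPolynomial.mem_support_iff.mpr hne)
        rw [finsupp_degree_cons] at h1
        omega
      have hh_eq : h = C (-a₀) * g := by
        rw [map_neg, neg_mul]
        exact eq_neg_of_add_eq_zero_left heq
      have hcnt := cnt_succ f (fun a => C (a - a₀) * g) (fun a ha y => by
        rw [eval_cons_eq hml a y, ← hh, ← hg, hh_eq]
        simp only [eval_mul, eval_C, map_neg]
        ring)
      rw [hcnt]
      have hcard : ((Finset.univ.filter (fun a : K => a ≠ 0)).erase a₀).card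
          = Fintype.card K - 2 := by
        rw [Finset.card_erase_of_mem (by simpa using ha₀), hK1]
        omega
      calc (Fintype.card K - 2) ^ min d (n + 1) *
            (Fintype.card K - 1) ^ (n + 1 - min d (n + 1))
          = (Fintype.card K - 2) *
            ((Fintype.card K - 2) ^ min (d - 1) n *
              (Fintype.card K - 1) ^ (n - min (d - 1) n)) := arith2 _ d n hd1
        _ = ∑ _a ∈ (Finset.univ.filter (fun a : K => a ≠ 0)).erase a₀,
              (Fintype.card K - 2) ^ min (d - 1) n *
                (Fintype.card K - 1) ^ (n - min (d - 1) n) := by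
            rw [Finset.sum_const, hcard, smul_eq_mul]
        _ ≤ ∑ a ∈ (Finset.univ.filter (fun a : K => a ≠ 0)).erase a₀,
              ((torus K n).filter fun y => eval y (C (a - a₀) * g) ≠ 0).card := by
            refine Finset.sum_le_sum fun a ha => ?_
            have hne : a - a₀ ≠ 0 := sub_ne_zero.mpr (Finset.ne_of_mem_erase ha)
            have hfe : ((torus K n).filter fun y => eval y (C (a - a₀) * g) ≠ 0)
                = ((torus K n).filter fun y => eval y g ≠ 0) := by
              apply Finset.filter_congr
              intro y _
              simp [eval_mul, eval_C, hne]
            rw [hfe]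
            exact IH (d - 1) g hgne hmlg hdg
        _ ≤ _ := Finset.sum_le_sum_of_subset (Finset.erase_subset _ _)

/-- Hamming weight of an evaluation codeword as a filter cardinality. -/
lemma weight_eq (X : Finset (Fin s → K)) (f : MvPolynomial (Fin s) K) :
    ({ i : ↥X | evalMap X f i ≠ 0 } : Set ↥X).ncard
      = (X.filter fun x => eval x f ≠ 0).card := by
  classical
  rw [Set.ncard_eq_toFinset_card', Set.toFinset_setOf]
  refine Finset.card_bij (fun i _ => (i : Fin s → K)) ?_ ?_ ?_
  · intro i hi
    refine Finset.mem_filter.mpr ⟨i.2, ?_⟩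
    simpa [evalMap] using (Finset.mem_filter.mp hi).2
  · intro i _ j _ hij
    exact Subtype.ext hij
  · intro x hx
    rcases Finset.mem_filter.mp hx with ⟨hx1, hx2⟩
    exact ⟨⟨x, hx1⟩, Finset.mem_filter.mpr ⟨Finset.mem_univ _, by simpa [evalMap] using hx2⟩, rfl⟩

omit [Fintype K] [DecidableEq K] in
lemma prod_X_eq_monomial (t : Finset (Fin s)) :
    (∏ i ∈ t, (X i : MvPolynomial (Fin s) K))
      = monomial (∑ i ∈ t, Finsupp.single i 1) (1 : K) := by
  classical
  induction t using Finset.induction_on with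
  | empty => simp [monomial_zero', C_1]
  | insert x t hx ih =>
    rw [Finset.prod_insert hx, Finset.sum_insert hx, ih, X, monomial_mul, one_mul]

omit [Fintype K] [DecidableEq K] in
/-- The product `∏_{i ∈ A} (X i - 1)` lies in the span of squarefree monomials of degree
at most `d`, provided `|A| ≤ d`. -/
lemma prod_mem_span {d : ℕ} (A : Finset (Fin s)) (hA : A.card ≤ d) :
    (∏ i ∈ A, (X i - 1 : MvPolynomial (Fin s) K))
      ∈ Submodule.span K (sqfreeMonomialsLe K s d) := by
  classical
  rw [show (∏ i ∈ A, (X i - 1 : MvPolynomial (Fin s) K))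
      = ∏ i ∈ A, ((X i : MvPolynomial (Fin s) K) + (-1)) from
    Finset.prod_congr rfl (fun i _ => by ring)]
  rw [Finset.prod_add]
  refine Submodule.sum_mem _ fun t ht => ?_
  have ht' : t ⊆ A := Finset.mem_powerset.mp ht
  rw [prod_X_eq_monomial, Finset.prod_const]
  have hC : ((-1 : MvPolynomial (Fin s) K)) ^ (A \ t).card
      = C ((-1 : K) ^ (A \ t).card) := by
    rw [map_pow, map_neg, C_1]
  rw [hC, mul_comm, ← smul_eq_C_mul]
  refine Submodule.smul_mem _ _ (Submodule.subset_span ?_)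
  refine ⟨∑ i ∈ t, Finsupp.single i 1, ?_, ?_, rfl⟩
  · intro j
    rw [Finset.sum_apply']
    simp only [Finsupp.single_apply]
    rw [Finset.sum_ite_eq' t j (fun _ => 1)]
    split <;> omega
  · have hdeg : Finsupp.degree (∑ i ∈ t, Finsupp.single i 1) = t.card := by
      rw [degree_eq_sum_univ]
      simp only [Finset.sum_apply', Finsupp.single_apply]
      rw [Finset.sum_comm]
      simp
    rw [hdeg]
    exact le_trans (Finset.card_le_card ht') hA

omit [Fintype K] [DecidableEq K] in
/-- Elements of the span of squarefree monomials have squarefree small-degree support. -/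
lemma mem_span_sqfree {d : ℕ} {f : MvPolynomial (Fin s) K}
    (hf : f ∈ Submodule.span K (sqfreeMonomialsLe K s d)) :
    ∀ a ∈ f.support, (∀ i, a i ≤ 1) ∧ Finsupp.degree a ≤ d := by
  classical
  let M : Submodule K (MvPolynomial (Fin s) K) :=
    { carrier := { p | ∀ a ∈ p.support, (∀ i, a i ≤ 1) ∧ Finsupp.degree a ≤ d }
      add_mem' := fun {p q} hp hq a ha => by
        rcases Finset.mem_union.mp (MvPolynomial.support_add ha) with h | h
        exacts [hp a h, hq a h]
      zero_mem' := by intro a ha; simp at ha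
      smul_mem' := fun c p hp a ha => hp a (MvPolynomial.support_smul ha) }
  have hM : f ∈ M := by
    refine Submodule.span_le.mpr ?_ hf
    rintro g ⟨a, ha1, ha2, rfl⟩
    intro b hb
    have : b = a := by
      have := MvPolynomial.support_monomial (s := a) (a := (1 : K)) ▸ hb
      simpa [one_ne_zero] using this
    subst this
    exact ⟨ha1, ha2⟩
  exact hM

/-- The number of torus points where `∏_{i ∈ A} (X i - 1)` does not vanish. -/
lemma count_prod (A : Finset (Fin s)) :
    ((torus K s).filter fun x =>
        eval x (∏ i ∈ A, (X i - 1 : MvPolynomial (Fin s) K)) ≠ 0).card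
      = (Fintype.card K - 2) ^ A.card * (Fintype.card K - 1) ^ (s - A.card) := by
  classical
  have hset : ((torus K s).filter fun x =>
        eval x (∏ i ∈ A, (X i - 1 : MvPolynomial (Fin s) K)) ≠ 0)
      = Fintype.piFinset (fun i => if i ∈ A then (Finset.univ \ {0, 1} : Finset K)
          else Finset.univ \ {0}) := by
    ext x
    rw [Finset.mem_filter, Fintype.mem_piFinset, mem_torus']
    simp only [map_prod, map_sub, eval_X, map_one, Finset.prod_ne_zero_iff, sub_ne_zero]
    constructor
    · rintro ⟨h0, h1⟩ i
      by_cases hiA : i ∈ A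
      · simp [hiA, h0 i, h1 i hiA]
      · simp [hiA, h0 i]
    · intro hx
      refine ⟨fun i => ?_, fun i hiA => ?_⟩
      · have := hx i
        by_cases hiA : i ∈ A
        · rw [if_pos hiA] at this; simp at this; exact this.1
        · rw [if_neg hiA] at this; simpa using this
      · have := hx i
        rw [if_pos hiA] at this; simp at this; exact this.2
  rw [hset, Fintype.card_piFinset]
  have hcard2 : (Finset.univ \ ({0, 1} : Finset K)).card = Fintype.card K - 2 := by
    rw [Finset.card_sdiff_of_subset (Finset.subset_univ _), Finset.card_univ]
    congr 1
    rw [Finset.card_insert_of_notMem (by simp), Finset.card_singleton]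
  have hcard1 : (Finset.univ \ ({0} : Finset K)).card = Fintype.card K - 1 := by
    rw [Finset.card_sdiff_of_subset (Finset.subset_univ _), Finset.card_univ, Finset.card_singleton]
  rw [← Finset.prod_sdiff (Finset.subset_univ A)]
  rw [Finset.prod_congr rfl (fun i hi => by
        rw [if_neg (Finset.mem_sdiff.mp hi).2, hcard1]),
      Finset.prod_congr rfl (fun i (hi : i ∈ A) => by rw [if_pos hi, hcard2]),
      Finset.prod_const, Finset.prod_const,
      Finset.card_sdiff_of_subset (Finset.subset_univ A), Finset.card_univ, Fintype.card_fin]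
  ring

end Aux

/-- Theorem (minimum distance of the squarefree evaluation code `𝓒_{≤ d}`). -/
theorem minDist_squarefree_evaluation_code (K : Type*) [Field K] [Fintype K] (s d : ℕ)
    (hd1 : 1 ≤ d) (hds : d ≤ s) (hq : 3 ≤ Fintype.card K) :
    minDist ((Submodule.span K (sqfreeMonomialsLe K s d)).map (evalMap (torus K s))) =
      (Fintype.card K - 2) ^ d * (Fintype.card K - 1) ^ (s - d) := by
    classical
  set N := (Fintype.card K - 2) ^ d * (Fintype.card K - 1) ^ (s - d) with hNdef
  obtain ⟨A, -, hAcard⟩ := Finset.exists_subset_card_eq (s := (Finset.univ : Finset (Fin s))) (n := d)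
    (by simpa using hds)
  set fp := ∏ i ∈ A, (X i - 1 : MvPolynomial (Fin s) K) with hfp
  have hcard : ((torus K s).filter fun x => eval x fp ≠ 0).card = N := by
    rw [hfp, count_prod A, hAcard]
  have hNpos : 0 < N := by
    have h2 : 0 < Fintype.card K - 2 := by omega
    have h1 : 0 < Fintype.card K - 1 := by omega
    exact Nat.mul_pos (Nat.pow_pos h2) (Nat.pow_pos h1)
  have hvmem : evalMap (torus K s) fp
      ∈ (Submodule.span K (sqfreeMonomialsLe K s d)).map (evalMap (torus K s)) :=
    Submodule.mem_map_of_mem (prod_mem_span A (le_of_eq hAcard))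
  have hvne : evalMap (torus K s) fp ≠ 0 := by
    intro h0
    have hz : ((torus K s).filter fun x => eval x fp ≠ 0).card = 0 := by
      rw [Finset.card_eq_zero]
      ext x
      simp only [Finset.mem_filter, Finset.notMem_empty, iff_false, not_and]
      intro hx hne
      exact hne (by simpa [evalMap] using congrFun h0 ⟨x, hx⟩)
    omega
  have hmem : N ∈ { n | ∃ v ∈ (Submodule.span K (sqfreeMonomialsLe K s d)).map
      (evalMap (torus K s)), v ≠ 0 ∧
      ({ i : ↥(torus K s) | v i ≠ 0 }).ncard = n } :=
    ⟨evalMap (torus K s) fp, hvmem, hvne, by rw [weight_eq]; exact hcard⟩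
  unfold minDist
  apply le_antisymm
  · exact Nat.sInf_le hmem
  · refine le_csInf ⟨N, hmem⟩ ?_
    rintro n ⟨v, hvC, hvne', rfl⟩
    obtain ⟨f, hfspan, rfl⟩ := Submodule.mem_map.mp hvC
    have hf0 : f ≠ 0 := by rintro rfl; exact hvne' (map_zero _)
    have hsup := mem_span_sqfree hfspan
    have hml : ∀ a ∈ f.support, ∀ i, a i ≤ 1 := fun a ha => (hsup a ha).1
    have hdegf : f.totalDegree ≤ d := totalDegree_le_of_forall (fun a ha => (hsup a ha).2)
    have hlow := count_lower s d f hf0 hml hdegf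
    rw [min_eq_left hds] at hlow
    rw [weight_eq]
    exact hlow
end

section
/- Let $X$ be a finite subset of an affine space $\mathbb{A}^s = K^s$ over a field $K$, let $\prec$ be a monomial order on $S = K[t_1,\ldots,t_s]$, and let $F = \{f_1,\ldots,f_r\}$ be a set of polynomials of $S$. Then $|V_X(F)| = \deg(S/(I(X),F)) = \dim_K(S/(I(X),F)) = |\Delta_\prec(I(X),F)|$. -/
open MvPolynomial
open scoped MonomialOrder

variable {K : Type*} [Field K] {s : ℕ}

/-- `V_X(F)`: the affine variety of `F` in `X`. -/
def VX (X : Finset (Fin s → K)) (F : Finset (MvPolynomial (Fin s) K)) : Set (Fin s → K) :=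
  { x | x ∈ X ∧ ∀ f ∈ F, eval x f = 0 }

lemma le_leadExp (m : MonomialOrder (Fin s)) {f : MvPolynomial (Fin s) K} {b : Fin s →₀ ℕ}
    (hb : b ∈ f.support) : b ≼[m] leadExp m f := by
  unfold leadExp
  rw [AddEquiv.apply_symm_apply]
  exact Finset.le_sup hb

lemma leadExp_mem_support (m : MonomialOrder (Fin s)) {f : MvPolynomial (Fin s) K}
    (hf : f ≠ 0) : leadExp m f ∈ f.support := by
  obtain ⟨b, hb, hsup⟩ :=
    Finset.exists_mem_eq_sup f.support (support_nonempty.mpr hf) (fun a => m.toSyn a)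
  unfold leadExp
  rw [hsup, AddEquiv.symm_apply_apply]
  exact hb

lemma leadCoeff_ne_zero (m : MonomialOrder (Fin s)) {f : MvPolynomial (Fin s) K}
    (hf : f ≠ 0) : leadCoeff m f ≠ 0 :=
  mem_support_iff.mp (leadExp_mem_support m hf)

lemma leadExp_eq_of (m : MonomialOrder (Fin s)) {f : MvPolynomial (Fin s) K} {c : Fin s →₀ ℕ}
    (hc : coeff c f ≠ 0) (hmax : ∀ b ∈ f.support, b ≼[m] c) : leadExp m f = c := by
  have h1 : m.toSyn (leadExp m f) ≤ m.toSyn c := by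
    unfold leadExp
    rw [AddEquiv.apply_symm_apply]
    exact Finset.sup_le hmax
  have h2 := le_leadExp m (mem_support_iff.mpr hc)
  exact m.toSyn.injective (le_antisymm h1 h2)

lemma leadExp_monomial_mul (m : MonomialOrder (Fin s)) {h : MvPolynomial (Fin s) K}
    (hh : h ≠ 0) (e : Fin s →₀ ℕ) {c : K} (hc : c ≠ 0) :
    leadExp m (monomial e c * h) = e + leadExp m h ∧
      leadCoeff m (monomial e c * h) = c * leadCoeff m h := by
  have hco : ∀ b, coeff b (monomial e c * h) = if e ≤ b then coeff (b - e) h * c else 0 := by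
    intro b
    rw [mul_comm, coeff_mul_monomial']
  have hle : leadExp m (monomial e c * h) = e + leadExp m h := by
    apply leadExp_eq_of
    · rw [hco, if_pos le_self_add, add_tsub_cancel_left]
      exact mul_ne_zero (leadCoeff_ne_zero m hh) hc
    · intro b hb
      rw [mem_support_iff, hco] at hb
      by_cases hbe : e ≤ b
      · rw [if_pos hbe] at hb
        have h1 : (b - e) ≼[m] leadExp m h :=
          le_leadExp m (mem_support_iff.mpr fun hz => hb (by rw [hz, zero_mul]))
        have h2 : b = e + (b - e) := by rw [add_tsub_cancel_of_le hbe]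
        have h3 : m.toSyn b = m.toSyn e + m.toSyn (b - e) := by
          conv_lhs => rw [h2]
          rw [map_add]
        rw [h3, map_add]
        exact add_le_add (le_refl _) h1
      · rw [if_neg hbe] at hb
        exact absurd rfl hb
  refine ⟨hle, ?_⟩
  rw [leadCoeff, hle, hco, if_pos le_self_add, add_tsub_cancel_left, mul_comm]
  rfl

lemma sub_lead_lt (m : MonomialOrder (Fin s)) {f q : MvPolynomial (Fin s) K}
    (hf : f ≠ 0) (hq1 : leadExp m q = leadExp m f) (hq2 : leadCoeff m q = leadCoeff m f)
    (hg : f - q ≠ 0) : leadExp m (f - q) ≺[m] leadExp m f := by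
  have hc0 : coeff (leadExp m f) (f - q) = 0 := by
    rw [coeff_sub]
    have : coeff (leadExp m f) q = leadCoeff m f := by
      rw [← hq2, leadCoeff, hq1]
    rw [this, leadCoeff, sub_self]
  have hmem := leadExp_mem_support m hg
  have hle : leadExp m (f - q) ≼[m] leadExp m f := by
    rw [mem_support_iff, coeff_sub] at hmem
    by_cases hbf : coeff (leadExp m (f - q)) f ≠ 0
    · exact le_leadExp m (mem_support_iff.mpr hbf)
    · push_neg at hbf
      have : coeff (leadExp m (f - q)) q ≠ 0 := fun hz => hmem (by rw [hbf, hz, sub_self])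
      rw [← hq1]
      exact le_leadExp m (mem_support_iff.mpr this)
  have hne : leadExp m (f - q) ≠ leadExp m f := by
    intro hEq
    rw [mem_support_iff, hEq, hc0] at hmem
    exact hmem rfl
  exact lt_of_le_of_ne hle (fun hz => hne (m.toSyn.injective hz))

lemma leadMon_mem_initialIdeal (m : MonomialOrder (Fin s)) {I : Ideal (MvPolynomial (Fin s) K)}
    {f : MvPolynomial (Fin s) K} (hfI : f ∈ I) (hf : f ≠ 0) :
    monomial (leadExp m f) (1 : K) ∈ initialIdeal m I :=
  Ideal.subset_span ⟨f, hfI, hf, rfl⟩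

lemma exists_divisor_of_mem_initialIdeal (m : MonomialOrder (Fin s))
    {I : Ideal (MvPolynomial (Fin s) K)} {c : Fin s →₀ ℕ}
    (hc : monomial c (1 : K) ∈ initialIdeal m I) :
    ∃ h ∈ I, h ≠ 0 ∧ leadExp m h ≤ c := by
  rw [initialIdeal, Ideal.span, Submodule.mem_span_set] at hc
  obtain ⟨w, hw, hsum⟩ := hc
  have h1 : coeff c (w.sum fun mi r => r • mi) ≠ 0 := by
    rw [hsum, coeff_monomial, if_pos rfl]
    exact one_ne_zero
  rw [Finsupp.sum, coeff_sum] at h1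
  obtain ⟨g, hg, hne⟩ := Finset.exists_ne_zero_of_sum_ne_zero h1
  obtain ⟨f, hfI, hf0, hgf⟩ := hw hg
  refine ⟨f, hfI, hf0, ?_⟩
  rw [hgf, leadMon, smul_eq_mul, coeff_mul_monomial'] at hne
  by_contra hle
  rw [if_neg hle] at hne
  exact hne rfl

lemma support_subset_of_mem_stdSpan (m : MonomialOrder (Fin s))
    {I : Ideal (MvPolynomial (Fin s) K)} {f : MvPolynomial (Fin s) K}
    (hf : f ∈ stdSpan m I) :
    ∀ b ∈ f.support, monomial b (1 : K) ∉ initialIdeal m I := by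
  refine Submodule.span_induction ?_ ?_ ?_ ?_ hf
  · rintro g ⟨⟨a, rfl⟩, hnot⟩ b hb
    classical
    rw [support_monomial, if_neg one_ne_zero, Finset.mem_singleton] at hb
    subst hb; exact hnot
  · intro b hb
    simp at hb
  · intro x y _ _ hx hy b hb
    have := MvPolynomial.support_add hb
    rcases Finset.mem_union.mp this with h | h
    · exact hx b h
    · exact hy b h
  · intro a x _ hx b hb
    exact hx b (MvPolynomial.support_smul hb)

lemma mk_mem_map_stdSpan (m : MonomialOrder (Fin s)) (I : Ideal (MvPolynomial (Fin s) K))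
    (f : MvPolynomial (Fin s) K) :
    Ideal.Quotient.mk I f ∈
      (stdSpan m I).map (Ideal.Quotient.mkₐ K I).toLinearMap := by
  set T := (stdSpan m I).map (Ideal.Quotient.mkₐ K I).toLinearMap with hT
  suffices H : ∀ v : m.syn, ∀ f : MvPolynomial (Fin s) K,
      m.toSyn (leadExp m f) = v → Ideal.Quotient.mk I f ∈ T by
    exact H _ f rfl
  intro v
  induction v using WellFoundedLT.induction with
  | _ v ih =>
    intro f hv
    by_cases hf : f = 0
    · subst hf
      rw [map_zero]
      exact Submodule.zero_mem T
    by_cases hmem : monomial (leadExp m f) (1 : K) ∈ initialIdeal m I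
    · obtain ⟨h, hI, hh0, hle⟩ := exists_divisor_of_mem_initialIdeal m hmem
      set q : MvPolynomial (Fin s) K :=
        monomial (leadExp m f - leadExp m h) (leadCoeff m f / leadCoeff m h) * h with hqdef
      have hcne : leadCoeff m f / leadCoeff m h ≠ 0 :=
        div_ne_zero (leadCoeff_ne_zero m hf) (leadCoeff_ne_zero m hh0)
      have hml := leadExp_monomial_mul m hh0 (leadExp m f - leadExp m h) hcne
      have hq1 : leadExp m q = leadExp m f := by
        rw [hqdef, hml.1, tsub_add_cancel_of_le hle]
      have hq2 : leadCoeff m q = leadCoeff m f := by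
        rw [hqdef, hml.2, div_mul_cancel₀ _ (leadCoeff_ne_zero m hh0)]
      have hqI : q ∈ I := I.mul_mem_left _ hI
      have hmkeq : Ideal.Quotient.mk I f = Ideal.Quotient.mk I (f - q) := by
        rw [map_sub, Ideal.Quotient.eq_zero_iff_mem.mpr hqI, sub_zero]
      by_cases hg : f - q = 0
      · rw [hmkeq, hg, map_zero]
        exact Submodule.zero_mem T
      · rw [hmkeq]
        exact ih _ (hv ▸ sub_lead_lt m hf hq1 hq2 hg) _ rfl
    · set q : MvPolynomial (Fin s) K := monomial (leadExp m f) (leadCoeff m f) with hqdef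
      have hq1 : leadExp m q = leadExp m f := by
        apply leadExp_eq_of
        · rw [hqdef, coeff_monomial, if_pos rfl]
          exact leadCoeff_ne_zero m hf
        · intro b hb
          classical
          rw [hqdef, support_monomial, if_neg (leadCoeff_ne_zero m hf),
            Finset.mem_singleton] at hb
          subst hb; exact le_refl _
      have hq2 : leadCoeff m q = leadCoeff m f := by
        rw [leadCoeff, hq1, hqdef, coeff_monomial, if_pos rfl]
      have hqT : Ideal.Quotient.mk I q ∈ T := by
        refine ⟨q, ?_, rfl⟩
        have : q = leadCoeff m f • monomial (leadExp m f) (1 : K) := by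
          rw [hqdef, smul_monomial, smul_eq_mul, mul_one]
        rw [this]
        exact Submodule.smul_mem _ _ (Submodule.subset_span ⟨⟨_, rfl⟩, hmem⟩)
      have hrest : Ideal.Quotient.mk I (f - q) ∈ T := by
        by_cases hg : f - q = 0
        · rw [hg, map_zero]; exact Submodule.zero_mem T
        · exact ih _ (hv ▸ sub_lead_lt m hf hq1 hq2 hg) _ rfl
      have : Ideal.Quotient.mk I f = Ideal.Quotient.mk I (f - q) + Ideal.Quotient.mk I q := by
        rw [← (Ideal.Quotient.mk I).map_add, sub_add_cancel]
      rw [this]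
      exact Submodule.add_mem T hrest hqT

noncomputable def stdSpanEquiv (m : MonomialOrder (Fin s)) (I : Ideal (MvPolynomial (Fin s) K)) :
    (stdSpan m I) ≃ₗ[K] (MvPolynomial (Fin s) K ⧸ I) := by
  refine LinearEquiv.ofBijective
    ((Ideal.Quotient.mkₐ K I).toLinearMap.comp (stdSpan m I).subtype) ⟨?_, ?_⟩
  · rw [← LinearMap.ker_eq_bot, LinearMap.ker_eq_bot']
    intro x hx
    have hxI : (x : MvPolynomial (Fin s) K) ∈ I := by
      have : Ideal.Quotient.mk I (x : MvPolynomial (Fin s) K) = 0 := hx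
      exact Ideal.Quotient.eq_zero_iff_mem.mp this
    by_contra hne
    have hx0 : (x : MvPolynomial (Fin s) K) ≠ 0 := by
      intro hz
      exact hne (Subtype.ext hz)
    exact support_subset_of_mem_stdSpan m x.2 _ (leadExp_mem_support m hx0)
      (leadMon_mem_initialIdeal m hxI hx0)
  · intro y
    obtain ⟨f, rfl⟩ := Ideal.Quotient.mk_surjective y
    obtain ⟨g, hg, hgeq⟩ := mk_mem_map_stdSpan m I f
    exact ⟨⟨g, hg⟩, hgeq⟩

lemma stdMonomials_linearIndependent (m : MonomialOrder (Fin s))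
    (I : Ideal (MvPolynomial (Fin s) K)) :
    LinearIndependent K ((↑) : stdMonomials m I → MvPolynomial (Fin s) K) := by
  have hli := (MvPolynomial.basisMonomials (Fin s) K).linearIndependent.linearIndepOn_id
  show LinearIndepOn K id (stdMonomials m I)
  refine LinearIndepOn.mono hli ?_
  rintro g ⟨⟨a, rfl⟩, -⟩
  exact ⟨a, by rw [coe_basisMonomials]⟩

lemma finrank_quotient_eq_ncard_stdMonomials (m : MonomialOrder (Fin s))
    (I : Ideal (MvPolynomial (Fin s) K)) [FiniteDimensional K (MvPolynomial (Fin s) K ⧸ I)] :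
    Module.finrank K (MvPolynomial (Fin s) K ⧸ I) = (stdMonomials m I).ncard := by
  have hfd : FiniteDimensional K (stdSpan m I) :=
    LinearEquiv.finiteDimensional (stdSpanEquiv m I).symm
  have hli := stdMonomials_linearIndependent m I
  -- the set of standard monomials is finite
  have hfin : (stdMonomials m I).Finite := by
    have hliS : LinearIndependent K
        (fun x : stdMonomials m I => (⟨(x : MvPolynomial (Fin s) K),
          Submodule.subset_span x.2⟩ : stdSpan m I)) := by
      apply LinearIndependent.of_comp (stdSpan m I).subtype
      exact hli
    have := hliS.finite
    exact Set.toFinite _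
  haveI : Fintype (stdMonomials m I) := hfin.fintype
  rw [← (stdSpanEquiv m I).finrank_eq]
  rw [Set.ncard_eq_toFinset_card']
  exact finrank_span_set_eq_card hli

lemma exists_sep (x y : Fin s → K) (hxy : x ≠ y) :
    ∃ p : MvPolynomial (Fin s) K, eval x p = 1 ∧ eval y p = 0 := by
  obtain ⟨i, hi⟩ := Function.ne_iff.mp hxy
  refine ⟨C (x i - y i)⁻¹ * (X i - C (y i)), ?_, ?_⟩
  · simp only [map_mul, map_sub, eval_C, eval_X]
    rw [inv_mul_cancel₀ (sub_ne_zero.mpr hi)]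
  · simp only [map_mul, map_sub, eval_C, eval_X]
    rw [sub_self, mul_zero]

attribute [local instance] Classical.propDecidable

noncomputable def sepPoly (x y : Fin s → K) : MvPolynomial (Fin s) K :=
  if hxy : x = y then 1 else Classical.choose (exists_sep x y hxy)

lemma sepPoly_self (x : Fin s → K) : sepPoly x x = 1 := dif_pos rfl

lemma sepPoly_eval₁ {x y : Fin s → K} (hxy : x ≠ y) : eval x (sepPoly x y) = 1 := by
  rw [sepPoly, dif_neg hxy]
  exact (Classical.choose_spec (exists_sep x y hxy)).1

lemma sepPoly_eval₂ {x y : Fin s → K} (hxy : x ≠ y) : eval y (sepPoly x y) = 0 := by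
  rw [sepPoly, dif_neg hxy]
  exact (Classical.choose_spec (exists_sep x y hxy)).2

noncomputable def indicPoly (Y : Finset (Fin s → K)) (x : Fin s → K) :
    MvPolynomial (Fin s) K :=
  ∏ y ∈ Y.erase x, sepPoly x y

lemma indicPoly_eval_self (Y : Finset (Fin s → K)) (x : Fin s → K) :
    eval x (indicPoly Y x) = 1 := by
  rw [indicPoly, map_prod]
  refine Finset.prod_eq_one ?_
  intro y hy
  exact sepPoly_eval₁ (Finset.ne_of_mem_erase hy).symm ▸ rfl

lemma indicPoly_eval_ne (Y : Finset (Fin s → K)) {x y : Fin s → K}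
    (hy : y ∈ Y) (hne : y ≠ x) : eval y (indicPoly Y x) = 0 := by
  rw [indicPoly, map_prod]
  exact Finset.prod_eq_zero (Finset.mem_erase.mpr ⟨hne, hy⟩) (sepPoly_eval₂ hne.symm)

lemma evalMap_surjective (Y : Finset (Fin s → K)) :
    Function.Surjective (evalMap Y) := by
  intro u
  refine ⟨∑ x ∈ Y.attach, C (u x) * indicPoly Y (x : Fin s → K), ?_⟩
  funext z
  show eval (z : Fin s → K) _ = u z
  rw [map_sum]
  rw [Finset.sum_eq_single_of_mem z (Finset.mem_attach _ _)]
  · rw [map_mul, eval_C, indicPoly_eval_self, mul_one]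
  · intro b _ hb
    rw [map_mul, eval_C,
      indicPoly_eval_ne Y z.2 (fun h => hb (Subtype.ext h).symm), mul_zero]

lemma ker_evalMap (Y : Finset (Fin s → K)) :
    LinearMap.ker (evalMap Y) =
      Submodule.restrictScalars K (affVanishingIdeal (Y : Set (Fin s → K))) := by
  ext f
  constructor
  · intro hf x hx
    have := congrFun (LinearMap.mem_ker.mp hf) ⟨x, hx⟩
    exact this
  · intro hf
    rw [LinearMap.mem_ker]
    funext z
    exact hf z z.2

noncomputable def quotVanishingEquiv (Y : Finset (Fin s → K)) :
    (MvPolynomial (Fin s) K ⧸ affVanishingIdeal (Y : Set (Fin s → K))) ≃ₗ[K] (Y → K) :=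
  (Submodule.Quotient.restrictScalarsEquiv K
      (affVanishingIdeal (Y : Set (Fin s → K)))).symm ≪≫ₗ
    Submodule.quotEquivOfEq _ _ (ker_evalMap Y).symm ≪≫ₗ
    (evalMap Y).quotKerEquivOfSurjective (evalMap_surjective Y)

lemma finrank_quot_vanishing (Y : Finset (Fin s → K)) :
    Module.finrank K (MvPolynomial (Fin s) K ⧸ affVanishingIdeal (Y : Set (Fin s → K))) =
      Y.card := by
  rw [(quotVanishingEquiv Y).finrank_eq, Module.finrank_fintype_fun_eq_card,
    Fintype.card_coe]

lemma finiteDimensional_quot_vanishing (Y : Finset (Fin s → K)) :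
    FiniteDimensional K (MvPolynomial (Fin s) K ⧸ affVanishingIdeal (Y : Set (Fin s → K))) :=
  LinearEquiv.finiteDimensional (quotVanishingEquiv Y).symm


lemma sup_eq_vanishing (X : Finset (Fin s → K)) (F : Finset (MvPolynomial (Fin s) K)) :
    affVanishingIdeal (X : Set (Fin s → K)) ⊔ Ideal.span (F : Set (MvPolynomial (Fin s) K)) =
      affVanishingIdeal ((X.filter fun x => ∀ f ∈ F, eval x f = 0 : Finset (Fin s → K)) :
        Set (Fin s → K)) := by
  set VF : Finset (Fin s → K) := X.filter fun x => ∀ f ∈ F, eval x f = 0 with hVF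
  apply le_antisymm
  · apply sup_le
    · intro g hg x hx
      rw [Finset.mem_coe, hVF, Finset.mem_filter] at hx
      exact hg x hx.1
    · rw [Ideal.span_le]
      intro f hf x hx
      rw [Finset.mem_coe, hVF, Finset.mem_filter] at hx
      exact hx.2 f hf
  · intro g hg
    set W : Finset (Fin s → K) := X.filter fun x => ¬ ∀ f ∈ F, eval x f = 0 with hW
    have hsel : ∀ x : {x // x ∈ W}, ∃ f ∈ F, eval (x : Fin s → K) f ≠ 0 := by
      rintro ⟨x, hx⟩
      rw [hW, Finset.mem_filter] at hx
      push_neg at hx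
      exact hx.2
    choose fsel hfF hfne using hsel
    set uu : {x // x ∈ W} → ({y // y ∈ X} → K) := fun x y =>
      if (y : Fin s → K) = (x : Fin s → K) then
        eval (x : Fin s → K) g / eval (x : Fin s → K) (fsel x) else 0 with huu
    choose p hp using fun x : {x // x ∈ W} => evalMap_surjective X (uu x)
    set hsum : MvPolynomial (Fin s) K := ∑ x ∈ W.attach, p x * fsel x with hhsum
    have hevalp : ∀ (x : {x // x ∈ W}) (y : Fin s → K) (hy : y ∈ X),
        eval y (p x) = uu x ⟨y, hy⟩ := by
      intro x y hy
      exact congrFun (hp x) ⟨y, hy⟩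
    have hsumF : hsum ∈ Ideal.span (F : Set (MvPolynomial (Fin s) K)) := by
      refine Ideal.sum_mem _ ?_
      intro x _
      exact Ideal.mul_mem_left _ _ (Ideal.subset_span (hfF x))
    have hdiff : g - hsum ∈ affVanishingIdeal (X : Set (Fin s → K)) := by
      intro y hy
      rw [Finset.mem_coe] at hy
      have heval : eval y hsum = ∑ x ∈ W.attach, eval y (p x) * eval y (fsel x) := by
        rw [hhsum, map_sum]
        refine Finset.sum_congr rfl ?_
        intro x _
        rw [map_mul]
      by_cases hyW : y ∈ W
      · have : eval y hsum = eval y g := by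
          rw [heval, Finset.sum_eq_single_of_mem ⟨y, hyW⟩ (Finset.mem_attach _ _)]
          · rw [hevalp ⟨y, hyW⟩ y hy, huu]
            simp only [if_pos rfl]
            exact div_mul_cancel₀ _ (hfne ⟨y, hyW⟩)
          · intro b _ hb
            rw [hevalp b y hy]
            have hyb : y ≠ (b : Fin s → K) := fun h => hb (Subtype.ext h.symm)
            simp only [huu]
            rw [if_neg hyb, zero_mul]
        rw [map_sub, this, sub_self]
      · have hyVF : y ∈ VF := by
          rw [hW, Finset.mem_filter] at hyW
          push_neg at hyW
          rw [hVF, Finset.mem_filter]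
          exact ⟨hy, hyW hy⟩
        have hg0 : eval y g = 0 := hg y (Finset.mem_coe.mpr hyVF)
        have : eval y hsum = 0 := by
          rw [heval]
          refine Finset.sum_eq_zero ?_
          intro x _
          have hxy : y ≠ (x : Fin s → K) := by
            intro h
            exact hyW (h ▸ x.2)
          rw [hevalp x y hy]
          simp only [huu]
          rw [if_neg hxy, zero_mul]
        rw [map_sub, hg0, this, sub_zero]
    have : g = (g - hsum) + hsum := by ring
    rw [this]
    exact Ideal.add_mem _ (Ideal.mem_sup_left hdiff) (Ideal.mem_sup_right hsumF)


/-- Theorem: `|V_X(F)| = deg S/(I(X),F) = dim_K S/(I(X),F) = |Δ_≺(I(X),F)|`. -/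
theorem card_variety_eq_degree_eq_dim_eq_footprint (X : Finset (Fin s → K))
    (m : MonomialOrder (Fin s)) (F : Finset (MvPolynomial (Fin s) K)) :
    (VX X F).ncard =
        adeg (affVanishingIdeal (X : Set (Fin s → K)) ⊔
          Ideal.span (F : Set (MvPolynomial (Fin s) K))) ∧
    adeg (affVanishingIdeal (X : Set (Fin s → K)) ⊔
          Ideal.span (F : Set (MvPolynomial (Fin s) K))) =
      Module.finrank K (MvPolynomial (Fin s) K ⧸
        (affVanishingIdeal (X : Set (Fin s → K)) ⊔
          Ideal.span (F : Set (MvPolynomial (Fin s) K)))) ∧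
    Module.finrank K (MvPolynomial (Fin s) K ⧸
        (affVanishingIdeal (X : Set (Fin s → K)) ⊔
          Ideal.span (F : Set (MvPolynomial (Fin s) K)))) =
      (stdMonomials m (affVanishingIdeal (X : Set (Fin s → K)) ⊔
        Ideal.span (F : Set (MvPolynomial (Fin s) K)))).ncard := by
  set VF : Finset (Fin s → K) := X.filter fun x => ∀ f ∈ F, eval x f = 0 with hVF
  have hVX : VX X F = (VF : Set (Fin s → K)) := by
    ext x
    simp only [VX, Set.mem_setOf_eq, Finset.coe_filter, hVF]
  have hJ : affVanishingIdeal (X : Set (Fin s → K)) ⊔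
      Ideal.span (F : Set (MvPolynomial (Fin s) K)) =
      affVanishingIdeal (VF : Set (Fin s → K)) := sup_eq_vanishing X F
  haveI hFD : FiniteDimensional K (MvPolynomial (Fin s) K ⧸
      (affVanishingIdeal (X : Set (Fin s → K)) ⊔
        Ideal.span (F : Set (MvPolynomial (Fin s) K)))) := by
    rw [hJ]
    exact finiteDimensional_quot_vanishing VF
  refine ⟨?_, rfl, ?_⟩
  · show (VX X F).ncard = Module.finrank K _
    rw [hVX, Set.ncard_coe_finset, hJ, finrank_quot_vanishing]
  · exact finrank_quotient_eq_ncard_stdMonomials m _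
end
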